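/- Let U be a real Hilbert space, W ⊆ U a finite-dimensional subspace with orthogonal projection P_W, V ⊆ U a finite-dimensional subspace with V ∩ W^⊥ = {0}, and ε ≥ 0. Let K := {v ∈ U : infDist(v, V) ≤ ε}. Let A* : W → U be a map such that for every w ∈ W there exists v_w ∈ V with ‖w − P_W v_w‖ ≤ ‖w − P_W v‖ for all v ∈ V and A*(w) = v_w + (w − P_W v_w). Then for every map A : W → U and every r ≥ 0: if ‖u − A(P_W u)‖ ≤ r for all u ∈ K, then ‖u − A*(P_W u)‖ ≤ r for all u ∈ K. -/

import Mathlib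

open scoped RealInnerProductSpace

/-- Worst-case optimality of the PBDW recovery map over the cylinder
`K = {v : dist(v, V) ≤ ε}` (Theorem 2.8 of Binev et al.). -/
theorem stmt_12
    {U : Type*} [NormedAddCommGroup U] [InnerProductSpace ℝ U] [CompleteSpace U]
    (W : Submodule ℝ U) [FiniteDimensional ℝ W]
    (V : Submodule ℝ U) [FiniteDimensional ℝ V]
    (hVW : V ⊓ Wᗮ = ⊥)
    (ε : ℝ) (hε : 0 ≤ ε)
    (Astar : W → U)
    (hAstar : ∀ w : W, ∃ vw ∈ V,
      (∀ v ∈ V, ‖(w : U) - (W.orthogonalProjection vw : U)‖ ≤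
        ‖(w : U) - (W.orthogonalProjection v : U)‖) ∧
      Astar w = vw + ((w : U) - (W.orthogonalProjection vw : U)))
    (A : W → U) (r : ℝ) (hr : 0 ≤ r)
    (h : ∀ u : U, Metric.infDist u (V : Set U) ≤ ε →
      ‖u - A (W.orthogonalProjection u)‖ ≤ r) :
    ∀ u : U, Metric.infDist u (V : Set U) ≤ ε →
      ‖u - Astar (W.orthogonalProjection u)‖ ≤ r := by
  intro u hu
  set w : W := W.orthogonalProjection u with hwdef
  obtain ⟨vw, hvwV, hmin, hAeq⟩ := hAstar w
  set η : U := (w : U) - (W.orthogonalProjection vw : U) with hηdef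
  have hηW : η ∈ W := W.sub_mem w.2 (W.orthogonalProjection vw).2
  -- orthogonality from minimality
  have horth : ∀ v ∈ V, ⟪η, (W.orthogonalProjection v : U)⟫ =
      ⟪η, (W.orthogonalProjection vw : U)⟫ := by
    intro v hv
    set p : U := (W.orthogonalProjection v : U) - (W.orthogonalProjection vw : U) with hpdef
    have key : ∀ t : ℝ, 2 * t * ⟪η, p⟫ ≤ t ^ 2 * ‖p‖ ^ 2 := by
      intro t
      have hmem : vw + t • (v - vw) ∈ V :=
        V.add_mem hvwV (V.smul_mem t (V.sub_mem hv hvwV))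
      have h1 := hmin _ hmem
      have h2 : (w : U) - (W.orthogonalProjection (vw + t • (v - vw)) : U) = η - t • p := by
        rw [map_add, map_smul, map_sub]
        push_cast
        rw [hηdef, hpdef]
        module
      rw [h2] at h1
      have h3 : ‖η - t • p‖ ^ 2 = ‖η‖ ^ 2 - 2 * (t * ⟪η, p⟫) + t ^ 2 * ‖p‖ ^ 2 := by
        rw [norm_sub_sq_real, real_inner_smul_right, norm_smul]
        rw [Real.norm_eq_abs, mul_pow, sq_abs]
      nlinarith [norm_nonneg η, norm_nonneg (η - t • p), h1, h3]
    have hc : ⟪η, p⟫ = 0 := by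
      by_contra hc
      by_cases hp : ‖p‖ = 0
      · have : p = 0 := norm_eq_zero.mp hp
        rw [this, inner_zero_right] at hc; exact hc rfl
      · have hd : 0 < ‖p‖ ^ 2 := by positivity
        have hkey := key (⟪η, p⟫ / ‖p‖ ^ 2)
        have htd : ⟪η, p⟫ / ‖p‖ ^ 2 * ‖p‖ ^ 2 = ⟪η, p⟫ := div_mul_cancel₀ _ hd.ne'
        have hc2 : 0 < ⟪η, p⟫ ^ 2 := by positivity
        nlinarith [hkey, htd, hd, hc2]
    have := inner_sub_right (𝕜 := ℝ) η (W.orthogonalProjection v : U)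
      (W.orthogonalProjection vw : U)
    rw [← hpdef] at this
    linarith [this, hc]
  -- inner products with η see only the projection
  have hperp : ∀ x : U, ⟪η, x⟫ = ⟪η, (W.orthogonalProjection x : U)⟫ := by
    intro x
    have hxm : x - W.orthogonalProjection x ∈ Wᗮ := Submodule.sub_starProjection_mem_orthogonal x
    have h0 : ⟪η, x - (W.orthogonalProjection x : U)⟫ = 0 :=
      (Submodule.mem_orthogonal W _).1 hxm η hηW
    rw [inner_sub_right] at h0
    linarith
  -- the reflected point is equidistant to V
  have hkey : ∀ v ∈ V, ‖((2:ℝ) • Astar w - u) - ((2:ℝ) • vw - v)‖ = ‖u - v‖ := by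
    intro v hv
    have he : ((2:ℝ) • Astar w - u) - ((2:ℝ) • vw - v) = (2:ℝ) • η - (u - v) := by
      rw [hAeq]; module
    have hin : ⟪η, u - v⟫ = ‖η‖ ^ 2 := by
      rw [inner_sub_right, hperp u, hperp v, horth v hv, ← hwdef, ← inner_sub_right, ← hηdef,
        real_inner_self_eq_norm_sq]
    have hsq : ‖(2:ℝ) • η - (u - v)‖ ^ 2 = ‖u - v‖ ^ 2 := by
      rw [norm_sub_sq_real, real_inner_smul_left, hin, norm_smul, Real.norm_eq_abs, mul_pow,
        sq_abs]
      ring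
    rw [he]
    have := congrArg Real.sqrt hsq
    rwa [Real.sqrt_sq (norm_nonneg _), Real.sqrt_sq (norm_nonneg _)] at this
  set ut : U := (2:ℝ) • Astar w - u with hutdef
  have hutK : Metric.infDist ut (V : Set U) ≤ ε := by
    refine le_trans ?_ hu
    have hE : Metric.infEDist ut (V : Set U) ≤ Metric.infEDist u (V : Set U) := by
      rw [Metric.le_infEDist]
      intro v hv
      have hmem : (2:ℝ) • vw - v ∈ V := V.sub_mem (V.smul_mem _ hvwV) hv
      calc Metric.infEDist ut (V : Set U) ≤ edist ut ((2:ℝ) • vw - v) :=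
            Metric.infEDist_le_edist_of_mem hmem
        _ = edist u v := by
            rw [edist_dist, edist_dist, dist_eq_norm, dist_eq_norm, hkey v hv]
    exact ENNReal.toReal_mono (Metric.infEDist_ne_top ⟨(0:U), V.zero_mem⟩) hE
  have hPut : W.orthogonalProjection ut = w := by
    have hηe : η = ((w - W.orthogonalProjection vw : W) : U) := by
      push_cast; rw [hηdef]
    have hPη : W.orthogonalProjection η = w - W.orthogonalProjection vw := by
      rw [hηe, Submodule.orthogonalProjectionOnto_mem_subspace_eq_self]
    have hute : ut = (2:ℝ) • (vw + η) - u := by rw [hutdef, hAeq]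
    rw [hute, map_sub, map_smul, map_add, hPη, ← hwdef]
    module
  have h2 := h ut hutK
  rw [hPut] at h2
  have h1 := h u hu
  have hdiff : u - ut = (2:ℝ) • (u - Astar w) := by rw [hutdef]; module
  have htri : ‖u - ut‖ ≤ ‖u - A w‖ + ‖ut - A w‖ := by
    have : u - ut = (u - A w) - (ut - A w) := by abel
    rw [this]
    exact norm_sub_le _ _
  have hnorm : ‖u - ut‖ = 2 * ‖u - Astar w‖ := by
    rw [hdiff, norm_smul, Real.norm_eq_abs]
    norm_num
  linarith
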